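/- Let L be a finitely generated group and R a normal subgroup of L such that every homomorphism from L/R to a finite group is trivial. Let U be a normal subgroup of L with U ≤ R and [R : U] finite, and let U^L be the intersection of all finite-index subgroups of L containing U. Then the quotient group U^L/U is perfect; equivalently, ⁅U^L, U^L⁆ · U = U^L. -/

import Mathlib

open Subgroup
open scoped commutatorElement

/-- A finitely generated group has only finitely many homomorphisms to a fixed
finite group. -/
lemma finite_monoidHom_of_fg {G F : Type*} [Group G] [Group F] [Finite F]
    (hfg : Group.FG G) : Finite (G →* F) := by
  classical
  obtain ⟨T, hT⟩ := Group.fg_def.mp hfg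
  refine Finite.of_injective (fun f : G →* F => (fun t : T => f t.1)) ?_
  intro f g h
  refine MonoidHom.eq_of_eqOn_dense hT ?_
  intro x hx
  exact congrFun h ⟨x, hx⟩

/-- In a finitely generated commutative group, every proper subgroup is contained in a
proper subgroup of finite index. -/
lemma exists_finiteIndex_of_ne_top {B : Type*} [CommGroup B] (hfg : Group.FG B)
    (S : Subgroup B) (hS : S ≠ ⊤) :
    ∃ M : Subgroup B, S ≤ M ∧ M ≠ ⊤ ∧ M.FiniteIndex := by
  classical
  have hchainCond : ∀ c ⊆ {P : Subgroup B | S ≤ P ∧ P ≠ ⊤}, IsChain (· ≤ ·) c → ∀ y ∈ c, ∃ ub ∈ {P : Subgroup B | S ≤ P ∧ P ≠ ⊤}, ∀ z ∈ c, z ≤ ub := by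
    rintro c hcs hchain y hy
    refine ⟨sSup c, ⟨le_trans (hcs hy).1 (le_sSup hy), ?_⟩, fun z hz => le_sSup hz⟩
    intro htop
    obtain ⟨T, hT⟩ := Group.fg_def.mp hfg
    have key : ∀ T' : Finset B, ∃ P ∈ c, (T' : Set B) ⊆ P := by
      intro T'
      induction T' using Finset.induction with
      | empty => exact ⟨y, hy, by simp⟩
      | @insert t T'' _ ih =>
        obtain ⟨P, hPc, hP⟩ := ih
        have htm : t ∈ sSup c := htop ▸ Subgroup.mem_top t
        obtain ⟨Q, hQc, htQ⟩ :=
          (Subgroup.mem_sSup_of_directedOn ⟨y, hy⟩ hchain.directedOn).mp htm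
        rcases hchain.total hPc hQc with hle | hle
        · exact ⟨Q, hQc, by
            rw [Finset.coe_insert]
            exact Set.insert_subset htQ (le_trans hP hle)⟩
        · exact ⟨P, hPc, by
            rw [Finset.coe_insert]
            exact Set.insert_subset (hle htQ) hP⟩
    obtain ⟨P, hPc, hP⟩ := key T
    have : (⊤ : Subgroup B) ≤ P := by
      rw [← hT]
      exact (Subgroup.closure_le P).mpr hP
    exact (hcs hPc).2 (top_le_iff.mp this)
  obtain ⟨M, hSM, hMs, hMmax⟩ :=
    zorn_le_nonempty₀ {P : Subgroup B | S ≤ P ∧ P ≠ ⊤} hchainCond S ⟨le_rfl, hS⟩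
  obtain ⟨hSM', hMtop⟩ := hMs
  refine ⟨M, hSM, hMtop, ?_⟩
  -- the quotient B ⧸ M
  have hsurj := QuotientGroup.mk'_surjective M
  have hsimple : ∀ P : Subgroup (B ⧸ M), P = ⊥ ∨ P = ⊤ := by
    intro P
    set P' := P.comap (QuotientGroup.mk' M) with hP'
    have hMP' : M ≤ P' := by
      intro m hm
      show QuotientGroup.mk' M m ∈ P
      have : QuotientGroup.mk' M m = 1 := by
        rw [← MonoidHom.mem_ker, QuotientGroup.ker_mk']; exact hm
      rw [this]; exact P.one_mem
    by_cases htop : P' = ⊤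
    · right
      apply Subgroup.comap_injective hsurj
      rw [← hP', htop, Subgroup.comap_top]
    · left
      have hPM : P' = M := by
        refine le_antisymm ?_ hMP'
        exact hMmax ⟨le_trans hSM' hMP', htop⟩ hMP'
      apply Subgroup.comap_injective hsurj
      rw [← hP', hPM]
      rw [show Subgroup.comap (QuotientGroup.mk' M) ⊥ = (QuotientGroup.mk' M).ker from rfl,
        QuotientGroup.ker_mk']
  -- B ⧸ M is nontrivial
  have hnt : Nontrivial (B ⧸ M) := by
    obtain ⟨x, hx⟩ : ∃ x : B, x ∉ M := by
      by_contra h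
      push_neg at h
      exact hMtop ((Subgroup.eq_top_iff' M).mpr h)
    refine ⟨⟨QuotientGroup.mk x, 1, fun h => hx ?_⟩⟩
    rwa [QuotientGroup.eq_one_iff] at h
  -- B ⧸ M is finite
  obtain ⟨g, hg⟩ := exists_ne (1 : B ⧸ M)
  have hgen : Subgroup.zpowers g = ⊤ :=
    (hsimple _).resolve_left (Subgroup.zpowers_ne_bot.2 hg)
  have hfin : IsOfFinOrder g := by
    rcases hsimple (Subgroup.zpowers (g ^ 2)) with h2 | h2
    · have hmem : g ^ 2 ∈ Subgroup.zpowers (g ^ 2) := Subgroup.mem_zpowers _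
      rw [h2, Subgroup.mem_bot] at hmem
      exact isOfFinOrder_iff_pow_eq_one.mpr ⟨2, two_pos, hmem⟩
    · have hmem : g ∈ Subgroup.zpowers (g ^ 2) := h2 ▸ Subgroup.mem_top g
      obtain ⟨k, hk⟩ := hmem
      simp only [← zpow_natCast g 2, ← zpow_mul] at hk
      have h1 : g ^ (2 * k - 1) = 1 := by
        have h0 : g ^ (2 * k) = g := by exact_mod_cast hk
        rw [zpow_sub, h0, zpow_one, mul_inv_cancel]
      have h2k : (2 * k - 1 : ℤ) ≠ 0 := by omega
      exact isOfFinOrder_iff_zpow_eq_one.mpr ⟨2 * k - 1, h2k, h1⟩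
  have hfinite : Finite (B ⧸ M) := by
    have : ((Subgroup.zpowers g : Subgroup (B ⧸ M)) : Set (B ⧸ M)).Finite := by
      rw [← hfin.powers_eq_zpowers]
      exact hfin.finite_powers
    rw [hgen] at this
    simpa using Set.finite_univ_iff.mp (by simpa using this)
  refine ⟨?_⟩
  rw [Subgroup.index_eq_card]
  exact Nat.card_ne_zero.mpr ⟨inferInstance, hfinite⟩
/-- The closure of a subgroup `U` in the profinite topology of `L`: the intersection of
all finite-index subgroups of `L` containing `U`. -/
def profClosure {L : Type*} [Group L] (U : Subgroup L) : Subgroup L :=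
  ⨅ V ∈ {V : Subgroup L | V.FiniteIndex ∧ U ≤ V}, V

open scoped Pointwise in
/-- Let `L` be finitely generated, `R ◁ L` with `L/R` having no
nontrivial finite quotients, and `U ◁ L` with `U ≤ R` of finite index in `R`.  Then the
quotient `U^L / U` is perfect; equivalently `⁅U^L, U^L⁆ · U = U^L`. -/
theorem profClosure_quotient_perfect {L : Type} [Group L] (hfg : Group.FG L)
    (R : Subgroup L) [R.Normal]
    (hH : ∀ (F : Type) [Group F] [Finite F] (f : (L ⧸ R) →* F), f = 1)
    (U : Subgroup L) [U.Normal] (hUR : U ≤ R) (hfin : (U.subgroupOf R).FiniteIndex) :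
    ⁅profClosure U, profClosure U⁆ ⊔ U = profClosure U := by
  classical
  haveI : Group.FG L := hfg
  set k := (U.subgroupOf R).index with hk
  have hk0 : k ≠ 0 := hfin.index_ne_zero
  set W := profClosure U with hWdef
  have hWeq : W = ⨅ V ∈ {V : Subgroup L | V.FiniteIndex ∧ U ≤ V}, V := rfl
  have hUW : U ≤ W := by
    rw [hWeq]; exact le_iInf₂ fun V hV => hV.2
  -- Step 1: every finite-index subgroup containing U has index at most k
  have hidx : ∀ V : Subgroup L, V.FiniteIndex → U ≤ V → V.index ≤ k ∧ V.index ≠ 0 := by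
    intro V hVfi hUV
    haveI := hVfi
    -- R ⊔ V = ⊤
    have hsup : R ⊔ V = ⊤ := by
      haveI hfi : (R ⊔ V).FiniteIndex := Subgroup.finiteIndex_of_le le_sup_right
      set N := (R ⊔ V).normalCore with hN
      haveI : N.FiniteIndex := by rw [hN]; infer_instance
      have hRN : R ≤ N := Subgroup.normal_le_normalCore.mpr le_sup_left
      haveI : Finite (L ⧸ N) := by
        have h := (inferInstance : N.FiniteIndex).index_ne_zero
        rw [Subgroup.index_eq_card] at h
        exact (Nat.card_ne_zero.mp h).2
      have hle : R ≤ Subgroup.comap (MonoidHom.id L) N := hRN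
      have hf := hH (L ⧸ N) (QuotientGroup.map R N (MonoidHom.id L) hle)
      have hNtop : N = ⊤ := by
        rw [Subgroup.eq_top_iff']
        intro x
        have h1 : QuotientGroup.map R N (MonoidHom.id L) hle (QuotientGroup.mk x) = 1 := by
          rw [hf]; rfl
        rw [QuotientGroup.map_mk, MonoidHom.id_apply, QuotientGroup.eq_one_iff] at h1
        exact h1
      have : (⊤ : Subgroup L) ≤ R ⊔ V := hNtop ▸ (R ⊔ V).normalCore_le
      exact top_le_iff.mp this
    -- index of V in R
    have hUV' : U.subgroupOf R ≤ V.subgroupOf R := fun x hx => hUV hx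
    have hdvd : (V.subgroupOf R).index ∣ k := Subgroup.index_dvd_of_le hUV'
    have hVRne : (V.subgroupOf R).index ≠ 0 := fun h => hk0 (by
      rw [hk]; exact Nat.eq_zero_of_zero_dvd (h ▸ hdvd))
    have hVRle : (V.subgroupOf R).index ≤ k := Nat.le_of_dvd (Nat.pos_of_ne_zero hk0) hdvd
    haveI : Finite (R ⧸ V.subgroupOf R) :=
      (Nat.card_ne_zero.mp (by rw [← Subgroup.index_eq_card]; exact hVRne)).2
    -- surjection from R ⧸ (V.subgroupOf R) onto L ⧸ V
    let g : R ⧸ (V.subgroupOf R) → L ⧸ V := fun x =>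
      Quotient.liftOn' x (fun r => (QuotientGroup.mk r.1 : L ⧸ V)) (by
        intro a b hab
        have hab' : a⁻¹ * b ∈ V.subgroupOf R := QuotientGroup.leftRel_apply.mp hab
        apply Quotient.sound'
        rw [QuotientGroup.leftRel_apply]
        simpa [Subgroup.mem_subgroupOf] using hab')
    have hgsurj : Function.Surjective g := by
      intro x
      induction x using QuotientGroup.induction_on with
      | H l =>
        have hl : l ∈ R ⊔ V := hsup ▸ Subgroup.mem_top l
        have hl' : l ∈ (R : Set L) * (V : Set L) := by
          rw [← Subgroup.normal_mul]; exact hl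
        obtain ⟨r, hr, v, hv, rfl⟩ := hl'
        refine ⟨QuotientGroup.mk (⟨r, hr⟩ : R), ?_⟩
        show (QuotientGroup.mk r : L ⧸ V) = QuotientGroup.mk (r * v)
        exact (QuotientGroup.mk_mul_of_mem r hv).symm
    have hcard : V.index ≤ (V.subgroupOf R).index := by
      rw [Subgroup.index_eq_card, Subgroup.index_eq_card]
      exact Nat.card_le_card_of_surjective g hgsurj
    exact ⟨le_trans hcard hVRle, hVfi.index_ne_zero⟩
  -- Step 2: W has finite index
  haveI hWfi : W.FiniteIndex := by
    haveI : Finite (L →* Equiv.Perm (Fin k)) := finite_monoidHom_of_fg hfg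
    set K : Subgroup L := ⨅ (ψ : L →* Equiv.Perm (Fin k)), ψ.ker with hKdef
    haveI hKfi : K.FiniteIndex := by
      refine Subgroup.finiteIndex_iInf fun ψ => ⟨?_⟩
      rw [Subgroup.index_ker]
      exact Nat.card_ne_zero.mpr ⟨⟨1, 1, map_one ψ⟩, inferInstance⟩
    have hKW : K ≤ W := by
      rw [hWeq]
      refine le_iInf₂ fun V hV => ?_
      obtain ⟨hVle, hVne⟩ := hidx V hV.1 hV.2
      haveI : Finite (L ⧸ V) :=
        (Nat.card_ne_zero.mp (by rw [← Subgroup.index_eq_card]; exact hVne)).2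
      obtain ⟨n, ⟨e⟩⟩ := Finite.exists_equiv_fin (L ⧸ V)
      have hn : n ≤ k := by
        rw [← Nat.card_eq_of_equiv_fin e, ← Subgroup.index_eq_card]; exact hVle
      let emb : (L ⧸ V) ↪ Fin k := e.toEmbedding.trans (Fin.castLEEmb hn)
      let ψ : L →* Equiv.Perm (Fin k) :=
        (Equiv.Perm.viaEmbeddingHom emb).comp (MulAction.toPermHom L (L ⧸ V))
      have hker : ψ.ker = V.normalCore := by
        rw [Subgroup.normalCore_eq_ker]
        ext x
        simp only [MonoidHom.mem_ker, MonoidHom.comp_apply, ψ]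
        constructor
        · intro h
          apply Equiv.Perm.viaEmbeddingHom_injective emb
          rw [h, map_one]
        · intro h
          rw [h, map_one]
      calc K ≤ ψ.ker := iInf_le _ ψ
        _ = V.normalCore := hker
        _ ≤ V := V.normalCore_le
    exact Subgroup.finiteIndex_of_le hKW
  -- Step 3: the perfectness argument
  refine le_antisymm ?_ ?_
  · refine sup_le ?_ hUW
    rw [Subgroup.commutator_le]
    intro g hg h hh
    exact mul_mem (mul_mem (mul_mem hg hh) (inv_mem hg)) (inv_mem hh)
  · by_contra hcon
    rw [SetLike.not_le_iff_exists] at hcon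
    set T : Subgroup L := ⁅W, W⁆ ⊔ U with hT
    have hUT : U ≤ T := le_sup_right
    haveI : Group.FG W := Subgroup.fg_of_index_ne_zero W
    set X : Subgroup W := T.subgroupOf W with hX
    have hXtop : X ≠ ⊤ := by
      intro h
      rw [hX, Subgroup.subgroupOf_eq_top] at h
      obtain ⟨x, hxW, hxT⟩ := hcon
      exact hxT (h hxW)
    have hcommX : commutator W ≤ X := by
      rw [_root_.commutator_def, Subgroup.commutator_le]
      intro a _ b _
      rw [hX, Subgroup.mem_subgroupOf]
      refine (le_sup_left : ⁅W, W⁆ ≤ T) ?_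
      show ((⁅a, b⁆ : W) : L) ∈ ⁅W, W⁆
      have : ((⁅a, b⁆ : W) : L) = ⁅(a : L), (b : L)⁆ := rfl
      rw [this]
      exact Subgroup.commutator_mem_commutator a.2 b.2
    have hofsurj : Function.Surjective (Abelianization.of (G := W)) := fun b =>
      QuotientGroup.induction_on b fun x => ⟨x, rfl⟩
    have hkerof : (Abelianization.of (G := W)).ker = commutator W := by
      ext x
      rw [MonoidHom.mem_ker]
      show (QuotientGroup.mk x : W ⧸ commutator W) = 1 ↔ x ∈ commutator W
      exact QuotientGroup.eq_one_iff x
    haveI : Group.FG (Abelianization W) := Group.fg_of_surjective hofsurj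
    set S₀ : Subgroup (Abelianization W) := X.map Abelianization.of with hS₀def
    have hcomapS₀ : S₀.comap Abelianization.of = X := by
      rw [hS₀def, Subgroup.comap_map_eq, hkerof, sup_eq_left.mpr hcommX]
    have hS₀top : S₀ ≠ ⊤ := by
      intro h
      apply hXtop
      rw [← hcomapS₀, h, Subgroup.comap_top]
    obtain ⟨M, hSM, hMne, hMfi⟩ :=
      exists_finiteIndex_of_ne_top (inferInstance : Group.FG (Abelianization W)) S₀ hS₀top
    set K₀ : Subgroup W := M.comap Abelianization.of with hK₀
    have hK₀fi : K₀.FiniteIndex := ⟨by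
      have hci : (M.comap (Abelianization.of (G := W))).index = M.index :=
        Subgroup.index_comap_of_surjective M hofsurj
      rw [hK₀, hci]
      exact hMfi.index_ne_zero⟩
    have hXK₀ : X ≤ K₀ := by
      rw [← hcomapS₀, hK₀]
      exact Subgroup.comap_mono hSM
    have hK₀top : K₀ ≠ ⊤ := by
      intro h
      apply hMne
      rw [eq_top_iff]
      intro b _
      obtain ⟨x, rfl⟩ := hofsurj b
      have : x ∈ K₀ := h ▸ Subgroup.mem_top x
      exact this
    set K : Subgroup L := K₀.map W.subtype with hKd
    have hKW : K ≤ W := Subgroup.map_subtype_le K₀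
    have hUK : U ≤ K := by
      intro u hu
      refine ⟨⟨u, hUW hu⟩, ?_, rfl⟩
      exact hXK₀ (by rw [hX, Subgroup.mem_subgroupOf]; exact hUT hu)
    have hKfi : K.FiniteIndex := by
      constructor
      have h2 := Subgroup.relIndex_mul_index hKW
      have h1 : K.relIndex W = K₀.index := by
        show (K.subgroupOf W).index = K₀.index
        congr 1
        rw [hKd, Subgroup.subgroupOf, Subgroup.comap_map_eq, Subgroup.ker_subtype, sup_bot_eq]
      intro h
      rw [h] at h2
      rcases Nat.mul_eq_zero.mp h2 with h3 | h3
      · rw [h1] at h3; exact hK₀fi.index_ne_zero h3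
      · exact hWfi.index_ne_zero h3
    have hWK : W ≤ K := by
      rw [hWeq]
      exact iInf₂_le K ⟨hKfi, hUK⟩
    apply hK₀top
    rw [Subgroup.eq_top_iff']
    intro x
    have hx : (x : L) ∈ K := hWK x.2
    obtain ⟨y, hy, hyx⟩ := hx
    have : y = x := Subtype.ext hyx
    rwa [this] at hy
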